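/- For any differentiable function F : ℝ → ℝ, the transformation (x,y) ↦ (x̃,ỹ) with x̃ = F(x+2√y) + F(x-2√y) and ỹ = (1/4)[F(x+2√y) - F(x-2√y)]² maps, for y > 0, solutions of the ODE (dy/dx)² = y to solutions of (dỹ/dx̃)² = ỹ. -/

import Mathlib

/-- For any differentiable `F`, the transformation
`x̃ = F(x+2√y) + F(x-2√y)`, `ỹ = (1/4)[F(x+2√y) - F(x-2√y)]²`
maps, for `y > 0`, solutions of `(dy/dx)² = y` to solutions of `(dỹ/dx̃)² = ỹ`. -/
theorem stmt5 (F : ℝ → ℝ) (hF : Differentiable ℝ F) (y : ℝ → ℝ)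
    (hy : Differentiable ℝ y) (x : ℝ) (hpos : y x > 0)
    (hsol : (deriv y x) ^ 2 = y x) :
    (deriv (fun t =>
        (1 / 4) * (F (t + 2 * Real.sqrt (y t)) - F (t - 2 * Real.sqrt (y t))) ^ 2) x) ^ 2
      = ((1 / 4) * (F (x + 2 * Real.sqrt (y x)) - F (x - 2 * Real.sqrt (y x))) ^ 2)
        * (deriv (fun t =>
            F (t + 2 * Real.sqrt (y t)) + F (t - 2 * Real.sqrt (y t))) x) ^ 2 := by
  set s := Real.sqrt (y x) with hs
  have hspos : 0 < s := Real.sqrt_pos.mpr hpos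
  have hyne : y x ≠ 0 := ne_of_gt hpos
  have hy' : HasDerivAt y (deriv y x) x := (hy x).hasDerivAt
  have hsqrt : HasDerivAt (fun t => Real.sqrt (y t)) (deriv y x / (2 * s)) x := by
    have := (Real.hasDerivAt_sqrt hyne).comp x hy'
    simpa [div_eq_inv_mul, mul_comm, mul_assoc, Function.comp_def] using this
  have hu : HasDerivAt (fun t => t + 2 * Real.sqrt (y t)) (1 + 2 * (deriv y x / (2 * s))) x :=
    (hasDerivAt_id x).add ((hsqrt.const_mul 2))
  have hv : HasDerivAt (fun t => t - 2 * Real.sqrt (y t)) (1 - 2 * (deriv y x / (2 * s))) x :=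
    (hasDerivAt_id x).sub ((hsqrt.const_mul 2))
  set u' := 1 + 2 * (deriv y x / (2 * s))
  set v' := 1 - 2 * (deriv y x / (2 * s))
  set a := x + 2 * s
  set b := x - 2 * s
  have hFu : HasDerivAt (fun t => F (t + 2 * Real.sqrt (y t))) (deriv F a * u') x :=
    (hF a).hasDerivAt.comp x hu
  have hFv : HasDerivAt (fun t => F (t - 2 * Real.sqrt (y t))) (deriv F b * v') x :=
    (hF b).hasDerivAt.comp x hv
  have hnum : HasDerivAt
      (fun t => (1 / 4 : ℝ) * (F (t + 2 * Real.sqrt (y t)) - F (t - 2 * Real.sqrt (y t))) ^ 2)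
      ((1 / 4) * (2 * (F a - F b) * (deriv F a * u' - deriv F b * v'))) x := by
    have h1 := (hFu.sub hFv).pow 2
    have := h1.const_mul (1 / 4 : ℝ)
    refine this.congr_deriv ?_
    simp only [Pi.sub_apply, Nat.cast_ofNat, pow_one, Nat.reduceSub]
    rfl
  have hden : HasDerivAt
      (fun t => F (t + 2 * Real.sqrt (y t)) + F (t - 2 * Real.sqrt (y t)))
      (deriv F a * u' + deriv F b * v') x := hFu.add hFv
  rw [hnum.deriv, hden.deriv]
  have hsq : (deriv y x) ^ 2 = s ^ 2 := by
    rw [hsol, hs, Real.sq_sqrt hpos.le]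
  have hcase : deriv y x = s ∨ deriv y x = -s := sq_eq_sq_iff_eq_or_eq_neg.mp hsq
  rcases hcase with h | h
  · have hu' : u' = 2 := by
      simp only [u', h]
      field_simp
      norm_num
    have hv' : v' = 0 := by
      simp only [v', h]
      field_simp
      norm_num
    rw [hu', hv']
    ring
  · have hu' : u' = 0 := by
      simp only [u', h]
      field_simp
      norm_num
    have hv' : v' = 2 := by
      simp only [v', h]
      field_simp
      norm_num
    rw [hu', hv']
    ring
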